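/- If f ∈ g* (g = strictly upper triangular n×n matrices) and (r,s) ∈ Supp(f), then dim g/g^f ≥ 2(s − r − 1). -/

import Mathlib

open Matrix

/-- `g`: the span of the matrix units `E_{rs}`, `r < s`, i.e. the strictly upper triangular
`n × n` complex matrices. -/
noncomputable def gUpper (n : ℕ) : Submodule ℂ (Matrix (Fin n) (Fin n) ℂ) :=
  Submodule.span ℂ
    {m | ∃ r s : Fin n, r < s ∧ m = Matrix.single r s (1 : ℂ)}

/-- Let `g` be the strictly upper triangular matrices, `f ∈ g*`, and
`g^f = {x ∈ g : f([x,y]) = 0 ∀ y ∈ g}`.  If `(r,s) ∈ Supp(f)`, i.e. `r < s` and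
`f(E_{rs}) ≠ 0`, then `dim g/g^f ≥ 2(s − r − 1)`. -/
theorem stmt9 (n : ℕ) (f : Matrix (Fin n) (Fin n) ℂ →ₗ[ℂ] ℂ)
    (W : Submodule ℂ (Matrix (Fin n) (Fin n) ℂ))
    (hW : (W : Set (Matrix (Fin n) (Fin n) ℂ)) =
      {x | x ∈ gUpper n ∧ ∀ y ∈ gUpper n, f (x * y - y * x) = 0})
    (r s : Fin n) (hrs : r < s) (hsupp : f (Matrix.single r s (1 : ℂ)) ≠ 0) :
    Module.finrank ℂ W + 2 * ((s : ℕ) - (r : ℕ) - 1) ≤ Module.finrank ℂ (gUpper n) := by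
  classical
  -- index type for the 2(s-r-1) matrices E_{rk}, E_{ks}, r < k < s
  set ι := (↥(Finset.Ioo r s)) ⊕ (↥(Finset.Ioo r s)) with hι
  set e : ι → Matrix (Fin n) (Fin n) ℂ := fun i =>
    Sum.elim (fun k : ↥(Finset.Ioo r s) => Matrix.single r k.1 (1 : ℂ))
             (fun k : ↥(Finset.Ioo r s) => Matrix.single k.1 s (1 : ℂ)) i with he
  have hmemIoo : ∀ k : ↥(Finset.Ioo r s), r < k.1 ∧ k.1 < s := fun k =>
    Finset.mem_Ioo.mp k.2
  -- the index map into the standard basis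
  set p : ι → Fin n × Fin n := Sum.elim (fun k => (r, k.1)) (fun k => (k.1, s)) with hp
  have hpinj : Function.Injective p := by
    rintro (a | a) (b | b) h <;> simp only [hp, Sum.elim_inl, Sum.elim_inr, Prod.mk.injEq] at h
    · exact congrArg Sum.inl (Subtype.ext h.2)
    · exact absurd h.1 (ne_of_lt (hmemIoo b).1)
    · exact absurd h.1 (ne_of_lt (hmemIoo a).1).symm
    · exact congrArg Sum.inr (Subtype.ext h.1)
  have heb : e = (Matrix.stdBasis ℂ (Fin n) (Fin n)) ∘ p := by
    funext i
    rcases i with a | a <;>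
      simp [he, hp, Matrix.stdBasis_eq_single]
  have hli : LinearIndependent ℂ e := by
    rw [heb]
    exact (Matrix.stdBasis ℂ (Fin n) (Fin n)).linearIndependent.comp p hpinj
  set V : Submodule ℂ (Matrix (Fin n) (Fin n) ℂ) := Submodule.span ℂ (Set.range e) with hV
  have hcard : Fintype.card ↥(Finset.Ioo r s) = (s : ℕ) - (r : ℕ) - 1 := by
    rw [Fintype.card_coe, Fin.card_Ioo]
  have hVrank : Module.finrank ℂ V = 2 * ((s : ℕ) - (r : ℕ) - 1) := by
    rw [hV, finrank_span_eq_card hli]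
    show Fintype.card (↥(Finset.Ioo r s) ⊕ ↥(Finset.Ioo r s)) = _
    rw [Fintype.card_sum, hcard]; ring
  -- each e i lies in gUpper n
  have heg : ∀ i, e i ∈ gUpper n := by
    rintro (a | a)
    · exact Submodule.subset_span ⟨r, a.1, (hmemIoo a).1, rfl⟩
    · exact Submodule.subset_span ⟨a.1, s, (hmemIoo a).2, rfl⟩
  have hVle : V ≤ gUpper n := Submodule.span_le.mpr (by rintro _ ⟨i, rfl⟩; exact heg i)
  have hWle : W ≤ gUpper n := fun x hx => by
    have : x ∈ (W : Set _) := hx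
    rw [hW] at this; exact this.1
  -- W ⊓ V = ⊥
  have hdisj : W ⊓ V = ⊥ := by
    rw [Submodule.eq_bot_iff]
    rintro x ⟨hxW, hxV⟩
    have hxW' : ∀ y ∈ gUpper n, f (x * y - y * x) = 0 := by
      have : x ∈ (W : Set _) := hxW
      rw [hW] at this; exact this.2
    have hxV' : x ∈ Submodule.span ℂ (Set.range e) := hxV
    rw [Submodule.mem_span_range_iff_exists_fun] at hxV'
    obtain ⟨c, hc⟩ := hxV'
    have key : ∀ y ∈ gUpper n, ∑ i, c i * f (e i * y - y * e i) = 0 := by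
      intro y hy
      have h0 := hxW' y hy
      rw [← hc, Finset.sum_mul, Finset.mul_sum, ← Finset.sum_sub_distrib] at h0
      simpa [smul_mul_assoc, mul_smul_comm, ← smul_sub, map_sum, smul_eq_mul] using h0
    have hcz : ∀ i, c i = 0 := by
      rintro (k0 | k0)
      · have hy : Matrix.single k0.1 s (1 : ℂ) ∈ gUpper n :=
          Submodule.subset_span ⟨k0.1, s, (hmemIoo k0).2, rfl⟩
        have h0 := key _ hy
        rw [Finset.sum_eq_single (Sum.inl k0)] at h0
        · have hm1 : Matrix.single (k0.1) s (1 : ℂ) * Matrix.single r (k0.1) 1 = 0 :=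
            Matrix.single_mul_single_of_ne _ _ _ _ hrs.ne' _
          simp only [he, Sum.elim_inl, Matrix.single_mul_single_same, hm1, mul_one,
            sub_zero] at h0
          exact (mul_eq_zero.mp h0).resolve_right hsupp
        · rintro (a | a) - hne
          · have hak : (a.1 : Fin n) ≠ k0.1 := fun h => hne (congrArg Sum.inl (Subtype.ext h))
            simp [he, hak, hrs.ne']
          · simp [he, (hmemIoo k0).2.ne', (hmemIoo a).2.ne']
        · intro h; exact absurd (Finset.mem_univ _) h
      · have hy : Matrix.single r k0.1 (1 : ℂ) ∈ gUpper n :=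
          Submodule.subset_span ⟨r, k0.1, (hmemIoo k0).1, rfl⟩
        have h0 := key _ hy
        rw [Finset.sum_eq_single (Sum.inr k0)] at h0
        · have hm1 : Matrix.single (k0.1) s (1 : ℂ) * Matrix.single r (k0.1) 1 = 0 :=
            Matrix.single_mul_single_of_ne _ _ _ _ hrs.ne' _
          simp only [he, Sum.elim_inr, Matrix.single_mul_single_same, hm1, mul_one, zero_sub,
            map_neg, mul_neg, neg_eq_zero] at h0
          exact (mul_eq_zero.mp h0).resolve_right hsupp
        · rintro (a | a) - hne
          · simp [he, (hmemIoo a).1.ne', (hmemIoo k0).1.ne']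
          · have hak : (k0.1 : Fin n) ≠ a.1 := fun h => hne (congrArg Sum.inr (Subtype.ext h.symm))
            simp [he, hak, hrs.ne']
        · intro h; exact absurd (Finset.mem_univ _) h
    rw [← hc]
    exact Finset.sum_eq_zero fun i _ => by rw [hcz i, zero_smul]
  -- conclude
  have hsum := Submodule.finrank_sup_add_finrank_inf_eq W V
  rw [hdisj] at hsum
  simp only [finrank_bot, add_zero] at hsum
  calc Module.finrank ℂ W + 2 * ((s : ℕ) - (r : ℕ) - 1)
      = Module.finrank ℂ W + Module.finrank ℂ V := by rw [hVrank]
    _ = Module.finrank ℂ ↥(W ⊔ V) := hsum.symm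
    _ ≤ Module.finrank ℂ (gUpper n) := Submodule.finrank_mono (sup_le hWle hVle)
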